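/- Let X be a random variable distributed uniformly on a finite set 𝒳 with |𝒳| ≥ 2, and let V be a random variable on the same probability space taking values in a finite set 𝒱. Let δ ≥ 0 be such that for every v ∈ 𝒱 with Pr[V = v] > 0 one has Σ_{x ∈ 𝒳} |Pr[X = x | V = v] − 1/|𝒳|| ≤ δ. Then the mutual information satisfies I(X;V) ≤ 2δ·log₂|𝒳| + 1, and consequently the conditional entropy satisfies H(X | V) ≥ (1 − 2δ)·log₂|𝒳| − 1. -/

import Mathlib

open Finset

/-- The probability of the event `E` under the probability mass function `μ` on a
finite sample space `Ω`. -/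
noncomputable def prEvent {Ω : Type*} [Fintype Ω] (μ : Ω → ℝ) (E : Ω → Prop) : ℝ :=
  haveI := Classical.decPred E
  ∑ ω ∈ Finset.univ.filter (fun ω => E ω), μ ω

/-- The Shannon entropy (in bits) of the random variable `X : Ω → 𝒳` under the
probability mass function `μ`.  (Note `Real.logb 2 0 = 0`, so terms with zero
probability contribute `0`.) -/
noncomputable def shannonH {Ω 𝒳 : Type*} [Fintype Ω] [Fintype 𝒳]
    (μ : Ω → ℝ) (X : Ω → 𝒳) : ℝ :=
  -∑ x : 𝒳, prEvent μ (fun ω => X ω = x) * Real.logb 2 (prEvent μ (fun ω => X ω = x))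

/-- The conditional Shannon entropy `H(X | V) = ∑_v Pr[V = v] · H(X | V = v)` (in bits),
where `H(X | V = v) = -∑_x Pr[X = x | V = v] · log₂ Pr[X = x | V = v]` and
`Pr[X = x | V = v] = Pr[X = x, V = v] / Pr[V = v]`. -/
noncomputable def condShannonH {Ω 𝒳 𝒱 : Type*} [Fintype Ω] [Fintype 𝒳] [Fintype 𝒱]
    (μ : Ω → ℝ) (X : Ω → 𝒳) (V : Ω → 𝒱) : ℝ :=
  ∑ v : 𝒱, prEvent μ (fun ω => V ω = v) *
    (-∑ x : 𝒳,
      (prEvent μ (fun ω => X ω = x ∧ V ω = v) / prEvent μ (fun ω => V ω = v)) *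
        Real.logb 2
          (prEvent μ (fun ω => X ω = x ∧ V ω = v) / prEvent μ (fun ω => V ω = v)))

section Aux

/-- Pointwise bound: `q·log₂(qN) ≤ (1/ln 2 + log₂ N)·(q − 1/N)⁺`. -/
lemma aux_point (q N : ℝ) (hq0 : 0 ≤ q) (hq1 : q ≤ 1) (hN : 1 ≤ N) :
    q * Real.logb 2 (q * N) ≤ (1 / Real.log 2 + Real.logb 2 N) * max (q - 1/N) 0 := by
  have hN0 : (0:ℝ) < N := by linarith
  rcases le_or_gt q (1/N) with h | h
  · have hmax : max (q - 1/N) 0 = 0 := max_eq_right (by linarith)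
    rw [hmax, mul_zero]
    apply mul_nonpos_of_nonneg_of_nonpos hq0
    apply Real.logb_nonpos (by norm_num) (by positivity)
    calc q * N ≤ (1/N) * N := by nlinarith
    _ = 1 := by field_simp
  · have hq0' : 0 < q := lt_trans (by positivity) h
    have hmax : max (q - 1/N) 0 = q - 1/N := max_eq_left (by linarith)
    have hlog2 : 0 < Real.log 2 := Real.log_pos (by norm_num)
    have hL1 : Real.logb 2 (q * N) ≤ Real.logb 2 N :=
      Real.logb_le_logb_of_le (by norm_num) (by positivity) (by nlinarith)
    have hL2 : Real.logb 2 (q * N) ≤ (q * N - 1) / Real.log 2 := by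
      rw [Real.logb, div_le_div_iff_of_pos_right hlog2]
      exact Real.log_le_sub_one_of_pos (by positivity)
    have key : (1/N) * ((q*N-1)/Real.log 2) = (q - 1/N) / Real.log 2 := by
      field_simp
    have t1 : (1/N) * Real.logb 2 (q*N) ≤ (q - 1/N)/Real.log 2 := by
      rw [← key]; exact mul_le_mul_of_nonneg_left hL2 (by positivity)
    have t2 : (q - 1/N) * Real.logb 2 (q*N) ≤ (q - 1/N) * Real.logb 2 N :=
      mul_le_mul_of_nonneg_left hL1 (by linarith)
    have e1 : q * Real.logb 2 (q*N) = (1/N) * Real.logb 2 (q*N) + (q - 1/N) * Real.logb 2 (q*N) := by ring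
    have e2 : (1/Real.log 2 + Real.logb 2 N) * (q - 1/N) = (q-1/N)/Real.log 2 + (q-1/N)*Real.logb 2 N := by ring
    rw [hmax]; linarith

variable {Ω 𝒳 𝒱 : Type*} [Fintype Ω] [Fintype 𝒳] [Fintype 𝒱]

omit [Fintype 𝒳] [Fintype 𝒱] in
lemma prEvent_nonneg (μ : Ω → ℝ) (hμ0 : ∀ ω, 0 ≤ μ ω) (E : Ω → Prop) : 0 ≤ prEvent μ E := by
  classical
  exact Finset.sum_nonneg (fun ω _ => hμ0 ω)

omit [Fintype 𝒳] [Fintype 𝒱] in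
lemma prEvent_eq_sum_ite (μ : Ω → ℝ) (E : Ω → Prop) [DecidablePred E] :
    prEvent μ E = ∑ ω, if E ω then μ ω else 0 := by
  rw [prEvent, Finset.sum_filter]
  exact Finset.sum_congr rfl fun ω _ => by split_ifs <;> rfl

omit [Fintype 𝒱] in
lemma sum_joint (μ : Ω → ℝ) (X : Ω → 𝒳) (V : Ω → 𝒱) (v : 𝒱) :
    ∑ x : 𝒳, prEvent μ (fun ω => X ω = x ∧ V ω = v) = prEvent μ (fun ω => V ω = v) := by
  classical
  simp only [prEvent_eq_sum_ite]
  rw [Finset.sum_comm]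
  congr 1; ext ω
  by_cases hv : V ω = v
  · simp [hv]
  · simp [hv]

omit [Fintype 𝒳] in
lemma sum_marg (μ : Ω → ℝ) (hμ1 : ∑ ω, μ ω = 1) (V : Ω → 𝒱) :
    ∑ v : 𝒱, prEvent μ (fun ω => V ω = v) = 1 := by
  classical
  simp only [prEvent_eq_sum_ite]
  rw [Finset.sum_comm]
  simpa using hμ1

omit [Fintype 𝒳] [Fintype 𝒱] in
lemma joint_le (μ : Ω → ℝ) (hμ0 : ∀ ω, 0 ≤ μ ω) (X : Ω → 𝒳) (V : Ω → 𝒱) (x : 𝒳) (v : 𝒱) :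
    prEvent μ (fun ω => X ω = x ∧ V ω = v) ≤ prEvent μ (fun ω => V ω = v) := by
  classical
  simp only [prEvent_eq_sum_ite]
  apply Finset.sum_le_sum
  intro ω _
  by_cases h : X ω = x ∧ V ω = v
  · simp [h, h.2]
  · split_ifs <;> simp [hμ0 ω]

end Aux

theorem mutualInfo_le_of_statistically_close {Ω 𝒳 𝒱 : Type*}
    [Fintype Ω] [Fintype 𝒳] [Fintype 𝒱]
    (μ : Ω → ℝ) (hμ0 : ∀ ω, 0 ≤ μ ω) (hμ1 : ∑ ω, μ ω = 1)
    (X : Ω → 𝒳) (V : Ω → 𝒱)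
    (hcard : 2 ≤ Fintype.card 𝒳)
    (hunif : ∀ x : 𝒳, prEvent μ (fun ω => X ω = x) = 1 / (Fintype.card 𝒳 : ℝ))
    (δ : ℝ) (hδ : 0 ≤ δ)
    (hstat : ∀ v : 𝒱, 0 < prEvent μ (fun ω => V ω = v) →
      ∑ x : 𝒳,
        |prEvent μ (fun ω => X ω = x ∧ V ω = v) / prEvent μ (fun ω => V ω = v)
          - 1 / (Fintype.card 𝒳 : ℝ)| ≤ δ) :
    shannonH μ X - condShannonH μ X V ≤ 2 * δ * Real.logb 2 (Fintype.card 𝒳) + 1 ∧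
    (1 - 2 * δ) * Real.logb 2 (Fintype.card 𝒳) - 1 ≤ condShannonH μ X V := by
  classical
  set Nc : ℝ := (Fintype.card 𝒳 : ℝ) with hNc
  have hN2 : (2:ℝ) ≤ Nc := by rw [hNc]; exact_mod_cast hcard
  have hN1 : (1:ℝ) ≤ Nc := by linarith
  have hN0 : (0:ℝ) < Nc := by linarith
  have hlogN : 0 ≤ Real.logb 2 Nc := Real.logb_nonneg (by norm_num) hN1
  have hlog2 : 0 < Real.log 2 := Real.log_pos (by norm_num)
  set p : 𝒱 → ℝ := fun v => prEvent μ (fun ω => V ω = v) with hp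
  set j : 𝒳 → 𝒱 → ℝ := fun x v => prEvent μ (fun ω => X ω = x ∧ V ω = v) with hj
  have hpnn : ∀ v, 0 ≤ p v := fun v => prEvent_nonneg μ hμ0 _
  have hjnn : ∀ x v, 0 ≤ j x v := fun x v => prEvent_nonneg μ hμ0 _
  have hjle : ∀ x v, j x v ≤ p v := fun x v => joint_le μ hμ0 X V x v
  have hsumj : ∀ v, ∑ x, j x v = p v := fun v => sum_joint μ X V v
  have hsump : ∑ v, p v = 1 := sum_marg μ hμ1 V
  -- H(X) = log₂ N
  have hHX : shannonH μ X = Real.logb 2 Nc := by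
    rw [shannonH]
    simp only [hunif]
    rw [Finset.sum_const, card_univ, nsmul_eq_mul, one_div, Real.logb_inv]
    have hne : Nc ≠ 0 := ne_of_gt hN0
    field_simp
    rfl
  have hcond : condShannonH μ X V
      = ∑ v, p v * (-∑ x, (j x v / p v) * Real.logb 2 (j x v / p v)) := rfl
  -- generic reduction
  have main : ∀ B : ℝ, 0 ≤ B →
      (∀ v, 0 < p v →
        Real.logb 2 Nc + ∑ x, (j x v / p v) * Real.logb 2 (j x v / p v) ≤ B) →
      shannonH μ X - condShannonH μ X V ≤ B := by
    intro B hB hbd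
    rw [hHX, hcond]
    have e1 : Real.logb 2 Nc = ∑ v, p v * Real.logb 2 Nc := by
      rw [← Finset.sum_mul, hsump, one_mul]
    have e2 : ∑ v, p v * Real.logb 2 Nc
        - ∑ v, p v * (-∑ x, (j x v / p v) * Real.logb 2 (j x v / p v))
        = ∑ v, (p v * Real.logb 2 Nc
          - p v * (-∑ x, (j x v / p v) * Real.logb 2 (j x v / p v))) := by
      rw [Finset.sum_sub_distrib]
    calc Real.logb 2 Nc - ∑ v, p v * (-∑ x, (j x v / p v) * Real.logb 2 (j x v / p v))
        = ∑ v, (p v * Real.logb 2 Nc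
          - p v * (-∑ x, (j x v / p v) * Real.logb 2 (j x v / p v))) := by
          rw [← e2, ← e1]
      _ ≤ ∑ v, p v * B := by
          apply Finset.sum_le_sum
          intro v _
          rcases eq_or_lt_of_le (hpnn v) with h0 | h0
          · rw [← h0]; simp
          · have := hbd v h0
            have expand : p v * Real.logb 2 Nc
                - p v * (-∑ x, (j x v / p v) * Real.logb 2 (j x v / p v))
                = p v * (Real.logb 2 Nc + ∑ x, (j x v / p v) * Real.logb 2 (j x v / p v)) := by
              ring
            rw [expand]
            exact mul_le_mul_of_nonneg_left this (le_of_lt h0)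
      _ = B := by rw [← Finset.sum_mul, hsump, one_mul]
  -- the first inequality
  have goal1 : shannonH μ X - condShannonH μ X V ≤ 2 * δ * Real.logb 2 Nc + 1 := by
    rcases lt_or_ge δ (1/2) with hδh | hδh
    · -- δ < 1/2 : use the ℓ1 bound
      have hCnn : 0 ≤ 1 / Real.log 2 + Real.logb 2 Nc := by positivity
      have hB : shannonH μ X - condShannonH μ X V ≤ (1 / Real.log 2 + Real.logb 2 Nc) * δ := by
        apply main _ (mul_nonneg hCnn hδ)
        intro v hpv
        have hq0 : ∀ x, 0 ≤ j x v / p v := fun x => div_nonneg (hjnn x v) (hpnn v)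
        have hq1 : ∀ x, j x v / p v ≤ 1 := fun x => (div_le_one hpv).2 (hjle x v)
        have hsumq : ∑ x, j x v / p v = 1 := by
          rw [← Finset.sum_div, hsumj, div_self (ne_of_gt hpv)]
        -- identity: log N + ∑ q log q = ∑ q log (q N)
        have ident : Real.logb 2 Nc + ∑ x, (j x v / p v) * Real.logb 2 (j x v / p v)
            = ∑ x, (j x v / p v) * Real.logb 2 ((j x v / p v) * Nc) := by
          have pointwise : ∀ x : 𝒳, (j x v / p v) * Real.logb 2 ((j x v / p v) * Nc)
              = (j x v / p v) * Real.logb 2 Nc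
                + (j x v / p v) * Real.logb 2 (j x v / p v) := by
            intro x
            rcases eq_or_lt_of_le (hq0 x) with h0 | h0
            · rw [← h0]; simp
            · rw [Real.logb_mul (ne_of_gt h0) (ne_of_gt hN0)]; ring
          rw [Finset.sum_congr rfl (fun x _ => pointwise x), Finset.sum_add_distrib,
            ← Finset.sum_mul, hsumq, one_mul]
        rw [ident]
        have step1 : ∑ x, (j x v / p v) * Real.logb 2 ((j x v / p v) * Nc)
            ≤ ∑ x, (1 / Real.log 2 + Real.logb 2 Nc) * max (j x v / p v - 1/Nc) 0 := by
          apply Finset.sum_le_sum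
          intro x _
          exact aux_point _ _ (hq0 x) (hq1 x) hN1
        have step2 : ∑ x, (1 / Real.log 2 + Real.logb 2 Nc) * max (j x v / p v - 1/Nc) 0
            ≤ (1 / Real.log 2 + Real.logb 2 Nc) * δ := by
          rw [← Finset.mul_sum]
          apply mul_le_mul_of_nonneg_left _ hCnn
          calc ∑ x, max (j x v / p v - 1/Nc) 0
              ≤ ∑ x, |j x v / p v - 1/Nc| := by
                apply Finset.sum_le_sum
                intro x _
                exact max_le (le_abs_self _) (abs_nonneg _)
            _ ≤ δ := hstat v hpv
        linarith
      have hfin : (1 / Real.log 2 + Real.logb 2 Nc) * δ ≤ 2 * δ * Real.logb 2 Nc + 1 := by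
        have h1 : δ / Real.log 2 ≤ 1 := by
          rw [div_le_one hlog2]
          have := Real.log_two_gt_d9
          linarith
        have h2 : 0 ≤ δ * Real.logb 2 Nc := mul_nonneg hδ hlogN
        have e : (1 / Real.log 2 + Real.logb 2 Nc) * δ = δ / Real.log 2 + δ * Real.logb 2 Nc := by
          ring
        rw [e]; nlinarith
      linarith
    · -- δ ≥ 1/2 : trivial bound log N
      have hB : shannonH μ X - condShannonH μ X V ≤ Real.logb 2 Nc := by
        apply main _ hlogN
        intro v hpv
        have : ∑ x, (j x v / p v) * Real.logb 2 (j x v / p v) ≤ 0 := by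
          apply Finset.sum_nonpos
          intro x _
          have hq0 : 0 ≤ j x v / p v := div_nonneg (hjnn x v) (hpnn v)
          have hq1 : j x v / p v ≤ 1 := (div_le_one hpv).2 (hjle x v)
          exact mul_nonpos_of_nonneg_of_nonpos hq0
            (Real.logb_nonpos (by norm_num) hq0 hq1)
        linarith
      nlinarith
  refine ⟨goal1, ?_⟩
  rw [hHX] at goal1
  linarith
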